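/- There exists a bijection Θ on Dyck paths of semilength n such that sups(P) = Umass(Θ(P)) + dr(Θ(P)) for every Dyck path P; consequently Σ_P q^{sups(P)} = Σ_P q^{Umass(P)+dr(P)} over Dyck_n. -/

import Mathlib

namespace MahonianStats

open Finset

/-- The value sequence of a permutation of `{1,…,n}`: position `i` (0-indexed)
carries the value `σ(i+1) ∈ {1,…,n}`; positions `≥ n` carry the junk value `0`. -/
def pf {n : ℕ} (σ : Equiv.Perm (Fin n)) : ℕ → ℕ :=
  fun i => if h : i < n then ((σ ⟨i, h⟩ : Fin n) : ℕ) + 1 else 0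

/-- The value sequence of a list (junk value `0` out of range). -/
def lf (l : List ℕ) : ℕ → ℕ := fun i => l.getD i 0

/-- Descent positions (0-indexed). -/
def desSet (n : ℕ) (f : ℕ → ℕ) : Finset ℕ :=
  (range (n - 1)).filter fun i => f (i + 1) < f i

def des (n : ℕ) (f : ℕ → ℕ) : ℕ := (desSet n f).card

/-- Major index: sum of (1-indexed) descent positions. -/
def maj (n : ℕ) (f : ℕ → ℕ) : ℕ := ∑ i ∈ desSet n f, (i + 1)

/-- Occurrences of the vincular pattern (1-32). -/
def p1_32 (n : ℕ) (f : ℕ → ℕ) : ℕ :=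
  ((range n ×ˢ range n).filter fun p =>
    p.1 < p.2 ∧ p.2 + 1 < n ∧ f p.1 < f (p.2 + 1) ∧ f (p.2 + 1) < f p.2).card

/-- Occurrences of the vincular pattern (31-2). -/
def p31_2 (n : ℕ) (f : ℕ → ℕ) : ℕ :=
  ((range n ×ˢ range n).filter fun p =>
    p.1 + 1 < p.2 ∧ f (p.1 + 1) < f p.2 ∧ f p.2 < f p.1).card

/-- Occurrences of the vincular pattern (32-1). -/
def p32_1 (n : ℕ) (f : ℕ → ℕ) : ℕ :=
  ((range n ×ˢ range n).filter fun p =>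
    p.1 + 1 < p.2 ∧ f p.2 < f (p.1 + 1) ∧ f (p.1 + 1) < f p.1).card

/-- Occurrences of the vincular pattern (21-3). -/
def p21_3 (n : ℕ) (f : ℕ → ℕ) : ℕ :=
  ((range n ×ˢ range n).filter fun p =>
    p.1 + 1 < p.2 ∧ f (p.1 + 1) < f p.1 ∧ f p.1 < f p.2).card

/-- Occurrences of the vincular pattern (3-21). -/
def p3_21 (n : ℕ) (f : ℕ → ℕ) : ℕ :=
  ((range n ×ˢ range n).filter fun p =>
    p.1 < p.2 ∧ p.2 + 1 < n ∧ f (p.2 + 1) < f p.2 ∧ f p.2 < f p.1).card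

/-- Occurrences of the vincular pattern (13-2). -/
def p13_2 (n : ℕ) (f : ℕ → ℕ) : ℕ :=
  ((range n ×ˢ range n).filter fun p =>
    p.1 + 1 < p.2 ∧ f p.1 < f p.2 ∧ f p.2 < f (p.1 + 1)).card

/-- Occurrences of the vincular pattern (2-13). -/
def p2_13 (n : ℕ) (f : ℕ → ℕ) : ℕ :=
  ((range n ×ˢ range n).filter fun p =>
    p.1 < p.2 ∧ p.2 + 1 < n ∧ f p.2 < f p.1 ∧ f p.1 < f (p.2 + 1)).card

/-- Occurrences of the vincular pattern (2-31). -/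
def p2_31 (n : ℕ) (f : ℕ → ℕ) : ℕ :=
  ((range n ×ˢ range n).filter fun p =>
    p.1 < p.2 ∧ p.2 + 1 < n ∧ f (p.2 + 1) < f p.1 ∧ f p.1 < f p.2).card

/-- Number of inversions. -/
def invp (n : ℕ) (f : ℕ → ℕ) : ℕ :=
  ((range n ×ˢ range n).filter fun p => p.1 < p.2 ∧ f p.2 < f p.1).card

def mak (n : ℕ) (f : ℕ → ℕ) : ℕ := p1_32 n f + p31_2 n f + p32_1 n f + des n f

def mad (n : ℕ) (f : ℕ → ℕ) : ℕ := 2 * p2_31 n f + p31_2 n f + des n f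

def Av123 (n : ℕ) (f : ℕ → ℕ) : Prop :=
  ¬ ∃ i j k, i < j ∧ j < k ∧ k < n ∧ f i < f j ∧ f j < f k
def Av132 (n : ℕ) (f : ℕ → ℕ) : Prop :=
  ¬ ∃ i j k, i < j ∧ j < k ∧ k < n ∧ f i < f k ∧ f k < f j
def Av213 (n : ℕ) (f : ℕ → ℕ) : Prop :=
  ¬ ∃ i j k, i < j ∧ j < k ∧ k < n ∧ f j < f i ∧ f i < f k
def Av231 (n : ℕ) (f : ℕ → ℕ) : Prop :=
  ¬ ∃ i j k, i < j ∧ j < k ∧ k < n ∧ f k < f i ∧ f i < f j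
def Av312 (n : ℕ) (f : ℕ → ℕ) : Prop :=
  ¬ ∃ i j k, i < j ∧ j < k ∧ k < n ∧ f j < f k ∧ f k < f i
def Av321 (n : ℕ) (f : ℕ → ℕ) : Prop :=
  ¬ ∃ i j k, i < j ∧ j < k ∧ k < n ∧ f k < f j ∧ f j < f i

/-- Number of up-steps among the first `k` steps. -/
def ups (P : List Bool) (k : ℕ) : ℕ := (P.take k).count true

/-- Number of down-steps among the first `k` steps. -/
def downs (P : List Bool) (k : ℕ) : ℕ := (P.take k).count false

/-- `P` is a Dyck word (`true` = up-step, `false` = down-step). -/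
def IsDyck (P : List Bool) : Prop :=
  P.count true = P.count false ∧ ∀ k, downs P k ≤ ups P k

/-- Dyck paths of semilength `n`. -/
def DyckN (n : ℕ) (P : List Bool) : Prop := IsDyck P ∧ P.length = 2 * n

/-- Height of the path before step `i` (0-indexed). -/
def hB (P : List Bool) (i : ℕ) : ℕ := ups P i - downs P i

/-- Number of double rises `UU`. -/
def dr (P : List Bool) : ℕ :=
  ((Finset.range P.length).filter fun i =>
    P.getD i false = true ∧ P.getD (i + 1) false = true).card

/-- `sups`: sum over up-steps of `⌈h/2⌉`, `h` the height of the step's lowest point. -/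
def sups (P : List Bool) : ℕ :=
  ∑ i ∈ (Finset.range P.length).filter (fun i => P.getD i false = true), (hB P i + 1) / 2

/-- `sdowns`: sum over down-steps of `⌊h/2⌋`, `h` the height of the step's lowest point. -/
def sdowns (P : List Bool) : ℕ :=
  ∑ i ∈ (Finset.range P.length).filter (fun i => P.getD i false = false), hB P (i + 1) / 2

/-- `spea`: sum over peaks `UD` of (height of apex − 1). -/
def spea (P : List Bool) : ℕ :=
  ∑ i ∈ (Finset.range P.length).filter
      (fun i => i + 1 < P.length ∧ P.getD i false = true ∧ P.getD (i + 1) false = false),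
    hB P i

/-- Index of the matching down-step of the up-step at index `i`:
the least `j > i` at which the path returns to the height it had before step `i`. -/
noncomputable def matchD (P : List Bool) (i : ℕ) : ℕ :=
  sInf {j | i < j ∧ ups P (j + 1) + downs P i = ups P i + downs P (j + 1)}

/-- The mass statistic summed over all up-steps: for a double rise `s_i s_{i+1} = UU`,
factor the suffix after `s_i` as `U P₁ D P₂ D` and take `|P₂|/2`; other up-steps get `0`. -/
noncomputable def Umass (P : List Bool) : ℕ :=
  ∑ i ∈ (Finset.range P.length).filter
      (fun i => P.getD i false = true ∧ P.getD (i + 1) false = true),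
    (matchD P i - matchD P (i + 1) - 1) / 2

/-- Start of the tunnel of the valley at step `v`: the greatest `i ≤ v` such that the
height before step `i` equals the height after step `v`. -/
noncomputable def tunnelStart (P : List Bool) (v : ℕ) : ℕ :=
  sSup {i | i ≤ v ∧ ups P i + downs P (v + 1) = ups P (v + 1) + downs P i}

/-- `stun`: sum over valleys `DU` of half the length of the corresponding tunnel. -/
noncomputable def stun (P : List Bool) : ℕ :=
  ∑ v ∈ (Finset.range P.length).filter
      (fun v => P.getD v false = false ∧ P.getD (v + 1) false = true),
    (v + 1 - tunnelStart P v) / 2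

section Lists

variable {a b l : List Bool} {k i j : ℕ}

lemma take_L_lo (hk : k ≤ a.length) :
    (true :: a ++ false :: b).take (k+1) = true :: a.take k := by
  simp only [List.cons_append, List.take_succ_cons]
  rw [List.take_append_of_le_length hk]

lemma take_L_hi (j : ℕ) :
    (true :: a ++ false :: b).take (a.length + 2 + j)
      = (true :: a ++ [false]) ++ b.take j := by
  have h : true :: a ++ false :: b = (true :: a ++ [false]) ++ b := by simp
  have hl : (true :: a ++ [false]).length = a.length + 2 := by simp
  rw [h, show a.length + 2 + j = (true :: a ++ [false]).length + j by rw [hl],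
    List.take_append]
  rw [List.take_of_length_le (by omega), Nat.add_sub_cancel_left]

lemma ups_lo (hk : k ≤ a.length) :
    ups (true :: a ++ false :: b) (k+1) = ups a k + 1 := by
  rw [ups, take_L_lo hk, ups]
  simp [List.count_cons]

lemma downs_lo (hk : k ≤ a.length) :
    downs (true :: a ++ false :: b) (k+1) = downs a k := by
  rw [downs, take_L_lo hk, downs]
  simp [List.count_cons]

lemma ups_hi (j : ℕ) :
    ups (true :: a ++ false :: b) (a.length + 2 + j)
      = a.count true + ups b j + 1 := by
  rw [ups, take_L_hi j, ups]
  simp [List.count_cons, List.count_append]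

lemma downs_hi (j : ℕ) :
    downs (true :: a ++ false :: b) (a.length + 2 + j)
      = a.count false + downs b j + 1 := by
  rw [downs, take_L_hi j, downs]
  simp [List.count_cons, List.count_append]
  omega

lemma ups_zero : ups l 0 = 0 := rfl
lemma downs_zero : downs l 0 = 0 := rfl

lemma getD_zero : (true :: a ++ false :: b).getD 0 false = true := rfl

lemma getD_lo (h : i ≤ a.length) :
    (true :: a ++ false :: b).getD (i+1) false = a.getD i false := by
  simp only [List.cons_append, List.getD_cons_succ]
  rcases lt_or_eq_of_le h with h | h
  · rw [List.getD_append _ _ _ _ h]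
  · subst h
    rw [List.getD_append_right a (false :: b) false a.length le_rfl, Nat.sub_self,
      List.getD_eq_default _ _ le_rfl]
    rfl

lemma getD_sep : (true :: a ++ false :: b).getD (a.length + 1) false = false := by
  have := getD_lo (a := a) (b := b) (i := a.length) le_rfl
  rw [this, List.getD_eq_default _ _ le_rfl]

lemma getD_hi (j : ℕ) :
    (true :: a ++ false :: b).getD (a.length + 2 + j) false = b.getD j false := by
  simp only [List.cons_append, show a.length + 2 + j = (a.length + 1 + j) + 1 by omega,
    List.getD_cons_succ]
  rw [List.getD_append_right a (false :: b) false (a.length + 1 + j) (by omega)]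
  simp only [show a.length + 1 + j - a.length = j + 1 by omega]
  rfl

lemma length_L : (true :: a ++ false :: b).length = a.length + 2 + b.length := by
  simp; omega

lemma ups_succ_step (h : k < l.length) :
    ups l (k+1) = ups l k + (if l.getD k false = true then 1 else 0) ∧
    downs l (k+1) = downs l k + (if l.getD k false = true then 0 else 1) := by
  rw [ups, downs, ups, downs, List.take_succ, List.count_append, List.count_append]
  rw [List.getElem?_eq_getElem h]
  have hg : l.getD k false = l[k] := List.getD_eq_getElem l false h
  rcases Bool.eq_false_or_eq_true (l[k]) with hv | hv <;>
    simp [hv, hg, Option.toList, List.count_cons, List.getElem?_eq_getElem h]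

lemma ups_top (h : l.length ≤ k) : ups l k = l.count true := by
  rw [ups, List.take_of_length_le h]

lemma downs_top (h : l.length ≤ k) : downs l k = l.count false := by
  rw [downs, List.take_of_length_le h]

lemma count_false_eq (h : IsDyck l) : l.count false = l.count true := h.1.symm

lemma length_eq_counts (l : List Bool) : l.length = l.count true + l.count false := by
  induction l with
  | nil => rfl
  | cons x t ih =>
    cases x <;> (rw [List.length_cons, List.count_cons, List.count_cons, ih]; simp) <;> omega

lemma two_mul_count (h : IsDyck l) : l.length = 2 * l.count true := by
  have := length_eq_counts l
  have h1 := h.1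
  omega

lemma isDyck_cons (ha : IsDyck a) (hb : IsDyck b) :
    IsDyck (true :: a ++ false :: b) := by
  constructor
  · simp [List.count_cons, List.count_append, ha.1, hb.1]
    omega
  · intro k
    match k with
    | 0 => simp [ups_zero, downs_zero]
    | k + 1 =>
      rcases le_or_gt k a.length with h | h
      · rw [ups_lo h, downs_lo h]
        have := ha.2 k
        omega
      · have h2 : k + 1 = a.length + 2 + (k - 1 - a.length) := by omega
        rw [h2, ups_hi, downs_hi]
        have := hb.2 (k - 1 - a.length)
        have hc := ha.1
        omega

lemma head_true (h : IsDyck l) (hne : l ≠ []) : l.getD 0 false = true := by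
  match l, hne with
  | x :: t, _ =>
    by_contra hx
    have hx' : x = false := by
      cases x
      · rfl
      · exact absurd rfl hx
    subst hx'
    have := h.2 1
    simp [ups, downs, List.take_succ_cons, List.count_cons] at this

lemma nat_sInf_eq {S : Set ℕ} {j : ℕ} (hj : j ∈ S) (hmin : ∀ k ∈ S, j ≤ k) :
    sInf S = j :=
  le_antisymm (Nat.sInf_le hj) (hmin _ (Nat.sInf_mem ⟨j, hj⟩))

/-- Existence of a matching down step, with value < length. -/
lemma exists_match (hP : IsDyck l) (hi : i < l.length) (ht : l.getD i false = true) :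
    ∃ j, (i < j ∧ ups l (j + 1) + downs l i = ups l i + downs l (j + 1)) ∧
      j < l.length := by
  classical
  have hQ : ∃ k, k ≤ l.length ∧ i < k ∧
      ups l k + downs l i ≤ ups l i + downs l k := by
    refine ⟨l.length, le_rfl, hi, ?_⟩
    rw [ups_top le_rfl, downs_top le_rfl, hP.1]
    have := hP.2 i
    have : ups l i + downs l i ≤ ups l i + ups l i := by omega
    have hui : downs l i ≤ ups l i := hP.2 i
    omega
  set k0 := Nat.find hQ with hk0def
  have hk0 := Nat.find_spec hQ
  rw [← hk0def] at hk0
  have hmin : ∀ m < k0, ¬ (m ≤ l.length ∧ i < m ∧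
      ups l m + downs l i ≤ ups l i + downs l m) := fun m hm => Nat.find_min hQ hm
  -- k0 ≥ i + 2
  have hstep_i := ups_succ_step hi
  have hk0_ne : k0 ≠ i + 1 := by
    intro h
    have h3 := hk0.2.2
    rw [h, hstep_i.1, hstep_i.2, if_pos ht, if_pos ht] at h3
    omega
  have hk0_gt : i + 1 < k0 := lt_of_le_of_ne hk0.2.1 (Ne.symm hk0_ne)
  -- predecessor fails
  have hpred := hmin (k0 - 1) (by omega)
  have hple : k0 - 1 ≤ l.length := by omega
  have hpi : i < k0 - 1 := by omega
  have hfail : ups l i + downs l (k0 - 1) < ups l (k0 - 1) + downs l i := by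
    by_contra hcon
    exact hpred ⟨hple, hpi, by omega⟩
  have hklt : k0 - 1 < l.length := by omega
  obtain ⟨hs1, hs2⟩ := ups_succ_step hklt
  rw [show k0 - 1 + 1 = k0 by omega] at hs1 hs2
  refine ⟨k0 - 1, ⟨hpi, ?_⟩, hklt⟩
  rw [show k0 - 1 + 1 = k0 by omega]
  have h2 := hk0.2.2
  by_cases hv : l.getD (k0 - 1) false = true
  · rw [if_pos hv] at hs1 hs2
    omega
  · rw [if_neg hv] at hs1 hs2
    omega

lemma matchD_spec (hP : IsDyck l) (hi : i < l.length) (ht : l.getD i false = true) :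
    (i < matchD l i ∧
      ups l (matchD l i + 1) + downs l i = ups l i + downs l (matchD l i + 1)) ∧
      matchD l i < l.length := by
  obtain ⟨j, hj, hjl⟩ := exists_match hP hi ht
  have hne : {j | i < j ∧ ups l (j + 1) + downs l i = ups l i + downs l (j + 1)}.Nonempty :=
    ⟨j, hj⟩
  have hmem := Nat.sInf_mem hne
  exact ⟨hmem, lt_of_le_of_lt (Nat.sInf_le hj) hjl⟩

lemma matchD_le (hj : i < j ∧ ups l (j + 1) + downs l i = ups l i + downs l (j + 1)) :
    matchD l i ≤ j := Nat.sInf_le hj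

/-- (M1): the first up-step of `U a D b` matches the `D` at index `|a|+1`. -/
lemma matchD_zero (ha : IsDyck a) :
    matchD (true :: a ++ false :: b) 0 = a.length + 1 := by
  apply nat_sInf_eq
  · refine ⟨Nat.succ_pos _, ?_⟩
    rw [ups_zero, downs_zero, show a.length + 1 + 1 = a.length + 2 + 0 by omega,
      ups_hi, downs_hi, ha.1]
    simp [ups_zero, downs_zero]
  · rintro k ⟨hk0, hk⟩
    by_contra hlt
    push_neg at hlt
    have hk1 : k - 1 + 1 ≤ a.length := by omega
    rw [show k + 1 = (k - 1 + 1) + 1 by omega, ups_lo (k := k - 1 + 1) hk1,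
      downs_lo (k := k - 1 + 1) hk1, ups_zero, downs_zero] at hk
    have := ha.2 (k - 1 + 1)
    omega

/-- (M2): matches inside `a` shift by one. -/
lemma matchD_lo (ha : IsDyck a) (hi : i < a.length)
    (ht : a.getD i false = true) :
    matchD (true :: a ++ false :: b) (i + 1) = matchD a i + 1 := by
  obtain ⟨⟨hgt, heq⟩, hlt⟩ := matchD_spec ha hi ht
  apply nat_sInf_eq
  · refine ⟨by omega, ?_⟩
    rw [show matchD a i + 1 + 1 = (matchD a i + 1) + 1 from rfl,
      ups_lo (k := matchD a i + 1) (by omega), downs_lo (k := matchD a i + 1) (by omega),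
      ups_lo (k := i) (le_of_lt hi), downs_lo (k := i) (le_of_lt hi)]
    omega
  · rintro k ⟨hk0, hk⟩
    by_contra hcon
    push_neg at hcon
    have hk1 : k ≤ a.length := by omega
    rw [show k + 1 = (k - 1 + 1) + 1 by omega,
      ups_lo (k := k - 1 + 1) (by omega), downs_lo (k := k - 1 + 1) (by omega),
      ups_lo (k := i) (le_of_lt hi), downs_lo (k := i) (le_of_lt hi)] at hk
    have : matchD a i ≤ k - 1 := matchD_le ⟨by omega, by omega⟩
    omega

/-- (M3): matches inside `b` shift by `|a|+2`. -/
lemma matchD_hi (hb : IsDyck b) (hj : j < b.length)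
    (ht : b.getD j false = true) :
    matchD (true :: a ++ false :: b) (a.length + 2 + j) = a.length + 2 + matchD b j := by
  obtain ⟨⟨hgt, heq⟩, hlt⟩ := matchD_spec hb hj ht
  apply nat_sInf_eq
  · refine ⟨by omega, ?_⟩
    rw [show a.length + 2 + matchD b j + 1 = a.length + 2 + (matchD b j + 1) by omega,
      ups_hi, downs_hi, ups_hi, downs_hi]
    omega
  · rintro k ⟨hk0, hk⟩
    by_contra hcon
    push_neg at hcon
    rw [show k + 1 = a.length + 2 + (k - a.length - 2 + 1) by omega,
      ups_hi, downs_hi, ups_hi, downs_hi] at hk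
    have : matchD b j ≤ k - a.length - 2 := matchD_le ⟨by omega, by omega⟩
    omega

def supsF (P : List Bool) : ℕ :=
  ∑ i ∈ (Finset.range P.length).filter (fun i => P.getD i false = true), hB P i / 2

lemma sum_range_split (f : ℕ → ℕ) (m q : ℕ) :
    ∑ i ∈ range (m + 2 + q), f i
      = f 0 + (∑ k ∈ range m, f (k+1)) + f (m+1) + ∑ j ∈ range q, f (m+2+j) := by
  induction q with
  | zero =>
    simp only [Nat.add_zero, range_zero, sum_empty, add_zero]
    rw [show m + 2 = (m+1)+1 from rfl, Finset.sum_range_succ, Finset.sum_range_succ']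
    omega
  | succ q ih =>
    rw [show m+2+(q+1) = (m+2+q)+1 from rfl, Finset.sum_range_succ, ih,
      Finset.sum_range_succ]
    omega

lemma count_true_eq_sum (l : List Bool) :
    (∑ i ∈ range l.length, if l.getD i false = true then 1 else 0) = l.count true := by
  induction l with
  | nil => simp
  | cons x t ih =>
    rw [List.length_cons, Finset.sum_range_succ']
    simp only [List.getD_cons_succ, List.getD_cons_zero]
    cases x <;> rw [List.count_cons, ih] <;> simp

lemma hB_zero (l : List Bool) : hB l 0 = 0 := by
  simp [hB, ups_zero, downs_zero]

lemma hB_lo (ha : IsDyck a) (hk : k ≤ a.length) :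
    hB (true :: a ++ false :: b) (k+1) = hB a k + 1 := by
  rw [hB, hB, ups_lo hk, downs_lo hk]
  have := ha.2 k
  omega

lemma hB_hi (ha : IsDyck a) (hb : IsDyck b) (j : ℕ) :
    hB (true :: a ++ false :: b) (a.length + 2 + j) = hB b j := by
  rw [hB, hB, ups_hi, downs_hi]
  have := hb.2 j
  have := ha.1
  omega

lemma sups_decomp (ha : IsDyck a) (hb : IsDyck b) :
    sups (true :: a ++ false :: b) = supsF a + a.count true + sups b := by
  rw [sups, Finset.sum_filter, length_L, sum_range_split]
  have h0 : (if (true :: a ++ false :: b).getD 0 false = true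
      then (hB (true :: a ++ false :: b) 0 + 1) / 2 else 0) = 0 := by
    rw [if_pos getD_zero, hB_zero]
  have hsep : (if (true :: a ++ false :: b).getD (a.length + 1) false = true
      then (hB (true :: a ++ false :: b) (a.length + 1) + 1) / 2 else 0) = 0 := by
    rw [if_neg (by rw [getD_sep]; simp)]
  rw [h0, hsep]
  have hmid : (∑ k ∈ range a.length,
      if (true :: a ++ false :: b).getD (k+1) false = true
        then (hB (true :: a ++ false :: b) (k+1) + 1) / 2 else 0)
      = supsF a + a.count true := by
    have : ∀ k ∈ range a.length,
        (if (true :: a ++ false :: b).getD (k+1) false = true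
          then (hB (true :: a ++ false :: b) (k+1) + 1) / 2 else 0)
        = (if a.getD k false = true then hB a k / 2 else 0)
          + (if a.getD k false = true then 1 else 0) := by
      intro k hk
      rw [Finset.mem_range] at hk
      rw [getD_lo (le_of_lt hk), hB_lo ha (le_of_lt hk)]
      by_cases h : a.getD k false = true
      · rw [if_pos h, if_pos h, if_pos h]
        omega
      · rw [if_neg h, if_neg h, if_neg h]
    rw [Finset.sum_congr rfl this, Finset.sum_add_distrib, count_true_eq_sum,
      supsF, Finset.sum_filter]
  have hhi : (∑ j ∈ range b.length,
      if (true :: a ++ false :: b).getD (a.length + 2 + j) false = true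
        then (hB (true :: a ++ false :: b) (a.length + 2 + j) + 1) / 2 else 0)
      = sups b := by
    rw [sups, Finset.sum_filter]
    refine Finset.sum_congr rfl fun j hj => ?_
    rw [getD_hi, hB_hi ha hb]
  rw [hmid, hhi]
  omega

lemma supsF_decomp (ha : IsDyck a) (hb : IsDyck b) :
    supsF (true :: a ++ false :: b) = sups a + supsF b := by
  rw [supsF, Finset.sum_filter, length_L, sum_range_split]
  have h0 : (if (true :: a ++ false :: b).getD 0 false = true
      then hB (true :: a ++ false :: b) 0 / 2 else 0) = 0 := by
    rw [if_pos getD_zero, hB_zero]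
  have hsep : (if (true :: a ++ false :: b).getD (a.length + 1) false = true
      then hB (true :: a ++ false :: b) (a.length + 1) / 2 else 0) = 0 := by
    rw [if_neg (by rw [getD_sep]; simp)]
  rw [h0, hsep]
  have hmid : (∑ k ∈ range a.length,
      if (true :: a ++ false :: b).getD (k+1) false = true
        then hB (true :: a ++ false :: b) (k+1) / 2 else 0)
      = sups a := by
    rw [sups, Finset.sum_filter]
    refine Finset.sum_congr rfl fun k hk => ?_
    rw [Finset.mem_range] at hk
    rw [getD_lo (le_of_lt hk), hB_lo ha (le_of_lt hk)]
  have hhi : (∑ j ∈ range b.length,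
      if (true :: a ++ false :: b).getD (a.length + 2 + j) false = true
        then hB (true :: a ++ false :: b) (a.length + 2 + j) / 2 else 0)
      = supsF b := by
    rw [supsF, Finset.sum_filter]
    refine Finset.sum_congr rfl fun j hj => ?_
    rw [getD_hi, hB_hi ha hb]
  rw [hmid, hhi]
  omega

lemma getD_true_lt_length {l : List Bool} (h : l.getD i false = true) : i < l.length := by
  by_contra hc
  push_neg at hc
  rw [List.getD_eq_default _ _ hc] at h
  exact Bool.false_ne_true h

lemma dr_decomp :
    dr (true :: a ++ false :: b)
      = dr a + dr b + (if a.getD 0 false = true then 1 else 0) := by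
  rw [dr, Finset.card_filter, length_L, sum_range_split]
  have h0 : (if (true :: a ++ false :: b).getD 0 false = true
      ∧ (true :: a ++ false :: b).getD 1 false = true then 1 else 0)
      = (if a.getD 0 false = true then 1 else 0) := by
    rw [show (1 : ℕ) = 0 + 1 from rfl, getD_lo (Nat.zero_le _)]
    simp [getD_zero]
  have hsep : (if (true :: a ++ false :: b).getD (a.length + 1) false = true
      ∧ (true :: a ++ false :: b).getD (a.length + 1 + 1) false = true then 1 else 0)
      = 0 := by
    rw [if_neg]
    rw [getD_sep]
    simp
  have hmid : (∑ k ∈ range a.length,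
      if (true :: a ++ false :: b).getD (k+1) false = true
        ∧ (true :: a ++ false :: b).getD (k+1+1) false = true then 1 else 0)
      = dr a := by
    rw [dr, Finset.card_filter]
    refine Finset.sum_congr rfl fun k hk => ?_
    rw [Finset.mem_range] at hk
    rw [getD_lo (le_of_lt hk), show k+1+1 = (k+1)+1 from rfl, getD_lo hk]
  have hhi : (∑ j ∈ range b.length,
      if (true :: a ++ false :: b).getD (a.length + 2 + j) false = true
        ∧ (true :: a ++ false :: b).getD (a.length + 2 + j + 1) false = true
      then 1 else 0) = dr b := by
    rw [dr, Finset.card_filter]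
    refine Finset.sum_congr rfl fun j hj => ?_
    rw [getD_hi, show a.length + 2 + j + 1 = a.length + 2 + (j+1) by omega, getD_hi]
  rw [h0, hsep, hmid, hhi]
  omega

lemma Umass_decomp (ha : IsDyck a) (hb : IsDyck b) :
    Umass (true :: a ++ false :: b)
      = Umass a + Umass b
        + (if a.getD 0 false = true then (a.length - matchD a 0 - 1) / 2 else 0) := by
  rw [Umass, Finset.sum_filter, length_L, sum_range_split]
  set L := true :: a ++ false :: b with hL
  have h0 : (if L.getD 0 false = true ∧ L.getD 1 false = true
      then (matchD L 0 - matchD L 1 - 1) / 2 else 0)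
      = (if a.getD 0 false = true then (a.length - matchD a 0 - 1) / 2 else 0) := by
    have hg : L.getD 1 false = a.getD 0 false := by
      rw [show (1:ℕ) = 0 + 1 from rfl]
      exact getD_lo (Nat.zero_le _)
    by_cases h : a.getD 0 false = true
    · have hlen : 0 < a.length := getD_true_lt_length h
      rw [if_pos ⟨getD_zero, by rw [hg]; exact h⟩, if_pos h,
        matchD_zero ha, show (1:ℕ) = 0 + 1 from rfl, matchD_lo ha hlen h]
      congr 1
      have := (matchD_spec ha hlen h).2
      omega
    · rw [if_neg (by rw [hg]; exact fun hc => h hc.2), if_neg h]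
  have hsep : (if L.getD (a.length + 1) false = true
      ∧ L.getD (a.length + 1 + 1) false = true
      then (matchD L (a.length+1) - matchD L (a.length+1+1) - 1) / 2 else 0) = 0 := by
    rw [if_neg]
    rw [getD_sep]
    simp
  have hmid : (∑ k ∈ range a.length,
      if L.getD (k+1) false = true ∧ L.getD (k+1+1) false = true
        then (matchD L (k+1) - matchD L (k+1+1) - 1) / 2 else 0)
      = Umass a := by
    rw [Umass, Finset.sum_filter]
    refine Finset.sum_congr rfl fun k hk => ?_
    rw [Finset.mem_range] at hk
    rw [getD_lo (le_of_lt hk), show k+1+1 = (k+1)+1 from rfl, getD_lo hk]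
    by_cases h : a.getD k false = true ∧ a.getD (k+1) false = true
    · have hk1 : k + 1 < a.length := getD_true_lt_length h.2
      rw [if_pos h, if_pos h, matchD_lo ha hk h.1, matchD_lo ha hk1 h.2]
      congr 1
      omega
    · rw [if_neg h, if_neg h]
  have hhi : (∑ j ∈ range b.length,
      if L.getD (a.length + 2 + j) false = true
        ∧ L.getD (a.length + 2 + j + 1) false = true
        then (matchD L (a.length+2+j) - matchD L (a.length+2+j+1) - 1) / 2 else 0)
      = Umass b := by
    rw [Umass, Finset.sum_filter]
    refine Finset.sum_congr rfl fun j hj => ?_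
    rw [Finset.mem_range] at hj
    rw [getD_hi, show a.length + 2 + j + 1 = a.length + 2 + (j+1) by omega, getD_hi]
    by_cases h : b.getD j false = true ∧ b.getD (j+1) false = true
    · have hj1 : j + 1 < b.length := getD_true_lt_length h.2
      rw [if_pos h, if_pos h, matchD_hi hb hj h.1, matchD_hi hb hj1 h.2]
      congr 1
      omega
    · rw [if_neg h, if_neg h]
  rw [h0, hsep, hmid, hhi]
  omega

end Lists

/-! ### Trees -/

inductive TT : Type
  | nil : TT
  | node : TT → TT → TT
deriving DecidableEq

namespace TT

def sz : TT → ℕ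
  | nil => 0
  | node a b => sz a + sz b + 1

mutual
def sT : TT → ℕ
  | nil => 0
  | node a b => gT a + sz a + sT b
def gT : TT → ℕ
  | nil => 0
  | node a b => sT a + gT b
end

mutual
def mT : TT → ℕ
  | nil => 0
  | node a b => nuT a + mT b
def nuT : TT → ℕ
  | nil => 0
  | node a b => nuT a + mT b + sz b + 1
end

/-- all trees of size n -/
def allT : ℕ → Finset TT
  | 0 => {nil}
  | n + 1 =>
    (Finset.range (n + 1)).biUnion fun a =>
      ((allT (min a n)) ×ˢ (allT (n - a))).image fun p => node p.1 p.2
  decreasing_by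
    · exact Nat.lt_succ_of_le (Nat.min_le_right _ _)
    · exact Nat.lt_succ_of_le (Nat.sub_le _ _)

lemma mem_allT : ∀ n t, t ∈ allT n ↔ sz t = n := by
  intro n
  induction n using Nat.strong_induction_on with
  | _ n ih =>
    intro t
    match n, t with
    | 0, nil => simp [allT, sz]
    | 0, node a b => simp [allT, sz]
    | n + 1, nil => simp [allT, sz]
    | n + 1, node a b =>
      rw [allT]
      simp only [Finset.mem_biUnion, Finset.mem_image, Finset.mem_product, Finset.mem_range,
        Prod.exists, sz]
      constructor
      · rintro ⟨c, hc, x, y, ⟨hx, hy⟩, h⟩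
        cases h
        rw [min_eq_left (Nat.le_of_lt_succ hc)] at hx
        rw [ih c (Nat.lt_succ_of_le (Nat.le_of_lt_succ hc)) a |>.1 hx,
          ih _ (Nat.lt_succ_of_le (Nat.sub_le _ _)) b |>.1 hy]
        omega
      · intro h
        refine ⟨sz a, by omega, a, b, ⟨?_, ?_⟩, rfl⟩
        · rw [min_eq_left (by omega)]
          exact (ih (sz a) (by omega) a).2 rfl
        · exact (ih (n - sz a) (by omega) b).2 (by omega)

lemma sum_allT_succ {M : Type*} [AddCommMonoid M] (f : TT → M) (n : ℕ) :
    ∑ t ∈ allT (n+1), f t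
      = ∑ a ∈ Finset.range (n+1), ∑ x ∈ allT a, ∑ y ∈ allT (n-a), f (node x y) := by
  rw [allT, Finset.sum_biUnion]
  · refine Finset.sum_congr rfl fun a ha => ?_
    rw [min_eq_left (Nat.le_of_lt_succ (Finset.mem_range.1 ha)), Finset.sum_image, Finset.sum_product]
    rintro ⟨x, y⟩ _ ⟨x', y'⟩ _ h
    simpa using h
  · intro a ha b hb hab
    simp only [Function.onFun]
    rw [Finset.disjoint_left]
    rintro t ht ht'
    simp only [Finset.mem_image, Finset.mem_product, Prod.exists] at ht ht'
    obtain ⟨x, y, ⟨hx, -⟩, rfl⟩ := ht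
    obtain ⟨x', y', ⟨hx', -⟩, h⟩ := ht'
    cases h
    simp only [Finset.mem_coe, Finset.mem_range] at ha hb
    rw [mem_allT] at hx hx'
    simp only [min_eq_left (Nat.le_of_lt_succ ha), min_eq_left (Nat.le_of_lt_succ hb)] at hx hx'
    exact hab (by omega)

open Polynomial in
noncomputable def PS (f : TT → ℕ) (n : ℕ) : Polynomial ℕ := ∑ t ∈ allT n, X ^ f t

open Polynomial

lemma PS_zero (f : TT → ℕ) (h : f nil = 0) : PS f 0 = 1 := by
  simp [PS, allT, h]

lemma sum_prod_aux (s t : Finset TT) (f g : TT → ℕ) :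
    ∑ x ∈ s, ∑ y ∈ t, (X : Polynomial ℕ) ^ (f x + g y)
      = (∑ x ∈ s, (X : Polynomial ℕ) ^ f x) * (∑ y ∈ t, (X : Polynomial ℕ) ^ g y) := by
  rw [Finset.sum_mul_sum]
  exact Finset.sum_congr rfl fun x _ => Finset.sum_congr rfl fun y _ => (pow_add X (f x) (g y))

lemma PS_sT_succ (n : ℕ) :
    PS sT (n+1) = ∑ a ∈ Finset.range (n+1), X ^ a * PS gT a * PS sT (n-a) := by
  rw [PS, sum_allT_succ]
  refine Finset.sum_congr rfl fun a ha => ?_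
  have h1 : ∑ x ∈ allT a, ∑ y ∈ allT (n-a), (X : Polynomial ℕ) ^ (sT (node x y))
      = ∑ x ∈ allT a, ∑ y ∈ allT (n-a), (X : Polynomial ℕ) ^ ((a + gT x) + sT y) := by
    refine Finset.sum_congr rfl fun x hx => Finset.sum_congr rfl fun y hy => ?_
    rw [mem_allT] at hx
    simp only [sT, hx]
    congr 1
    omega
  rw [h1, sum_prod_aux, PS, PS]
  congr 1
  rw [Finset.mul_sum]
  exact Finset.sum_congr rfl fun x _ => (pow_add X a (gT x))

lemma PS_gT_succ (n : ℕ) :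
    PS gT (n+1) = ∑ a ∈ Finset.range (n+1), PS sT a * PS gT (n-a) := by
  rw [PS, sum_allT_succ]
  refine Finset.sum_congr rfl fun a ha => ?_
  rw [PS, PS, ← sum_prod_aux]
  exact Finset.sum_congr rfl fun x _ => Finset.sum_congr rfl fun y _ => rfl

lemma PS_mT_succ (n : ℕ) :
    PS mT (n+1) = ∑ a ∈ Finset.range (n+1), PS nuT a * PS mT (n-a) := by
  rw [PS, sum_allT_succ]
  refine Finset.sum_congr rfl fun a ha => ?_
  rw [PS, PS, ← sum_prod_aux]
  exact Finset.sum_congr rfl fun x _ => Finset.sum_congr rfl fun y _ => rfl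

lemma PS_nuT_succ (n : ℕ) :
    PS nuT (n+1)
      = ∑ a ∈ Finset.range (n+1), PS nuT a * PS mT (n-a) * X ^ (n-a+1) := by
  rw [PS, sum_allT_succ]
  refine Finset.sum_congr rfl fun a ha => ?_
  have h1 : ∑ x ∈ allT a, ∑ y ∈ allT (n-a), (X : Polynomial ℕ) ^ (nuT (node x y))
      = ∑ x ∈ allT a, ∑ y ∈ allT (n-a), (X : Polynomial ℕ) ^ (nuT x + (mT y + (n-a+1))) := by
    refine Finset.sum_congr rfl fun x hx => Finset.sum_congr rfl fun y hy => ?_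
    rw [mem_allT] at hy
    simp only [nuT, hy]
    congr 1
    omega
  rw [h1, sum_prod_aux, PS, PS, mul_assoc]
  congr 1
  rw [Finset.sum_mul]
  exact Finset.sum_congr rfl fun y _ => (pow_add X (mT y) (n-a+1))

theorem treeEqui : ∀ n : ℕ, PS mT n = PS sT n ∧ PS nuT n = X ^ n * PS gT n := by
  intro n
  induction n using Nat.strong_induction_on with
  | _ n ih =>
    match n with
    | 0 => simp [PS_zero mT rfl, PS_zero sT rfl, PS_zero nuT rfl, PS_zero gT rfl]
    | n + 1 =>
      have hM : ∀ a ∈ Finset.range (n+1), PS nuT a * PS mT (n-a)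
          = X ^ a * PS gT a * PS sT (n-a) := by
        intro a ha
        rw [Finset.mem_range] at ha
        rw [(ih a (by omega)).2, (ih (n-a) (by omega)).1]
      constructor
      · rw [PS_mT_succ, PS_sT_succ]
        exact Finset.sum_congr rfl hM
      · rw [PS_nuT_succ, PS_gT_succ, Finset.mul_sum,
          ← Finset.sum_range_reflect (fun a => X ^ (n+1) * (PS sT a * PS gT (n-a))) (n+1)]
        refine Finset.sum_congr rfl fun a ha => ?_
        rw [Finset.mem_range] at ha
        rw [hM a (Finset.mem_range.2 ha)]
        simp only [Nat.add_sub_cancel]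
        rw [show n - (n - a) = a by omega]
        have hx : (X : Polynomial ℕ) ^ a * X ^ (n - a + 1) = X ^ (n+1) := by
          rw [← pow_add]
          congr 1
          omega
        calc X ^ a * PS gT a * PS sT (n - a) * X ^ (n - a + 1)
            = (X ^ a * X ^ (n - a + 1)) * (PS sT (n - a) * PS gT a) := by ring
          _ = X ^ (n+1) * (PS sT (n - a) * PS gT a) := by rw [hx]

lemma coeff_PS (f : TT → ℕ) (n k : ℕ) :
    (PS f n).coeff k = ((allT n).filter (fun t => f t = k)).card := by
  rw [PS, Polynomial.finset_sum_coeff, Finset.card_filter]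
  refine Finset.sum_congr rfl fun t ht => ?_
  rw [Polynomial.coeff_X_pow]
  simp [eq_comm]

theorem card_sT_eq_card_mT (n k : ℕ) :
    ((allT n).filter (fun t => sT t = k)).card
      = ((allT n).filter (fun t => mT t = k)).card := by
  rw [← coeff_PS, ← coeff_PS, (treeEqui n).1]

end TT


namespace TT

def toL : TT → List Bool
  | nil => []
  | node a b => true :: toL a ++ false :: toL b

lemma length_toL (t : TT) : (toL t).length = 2 * sz t := by
  induction t with
  | nil => rfl
  | node a b iha ihb =>
    simp only [toL, sz, List.length_cons, List.length_append, iha, ihb]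
    omega

lemma isDyck_nil : IsDyck ([] : List Bool) := by
  refine ⟨rfl, fun k => ?_⟩
  simp [ups, downs]

lemma isDyck_toL (t : TT) : IsDyck (toL t) := by
  induction t with
  | nil => exact isDyck_nil
  | node a b iha ihb => exact isDyck_cons iha ihb

lemma count_toL (t : TT) : (toL t).count true = sz t := by
  have h1 := two_mul_count (isDyck_toL t)
  have h2 := length_toL t
  omega

lemma sups_toL (t : TT) : sups (toL t) = sT t ∧ supsF (toL t) = gT t := by
  induction t with
  | nil => constructor <;> simp [sups, supsF, sT, gT, toL]
  | node a b iha ihb =>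
    constructor
    · rw [toL, sups_decomp (isDyck_toL a) (isDyck_toL b), count_toL, iha.2, ihb.1]
      rfl
    · rw [toL, supsF_decomp (isDyck_toL a) (isDyck_toL b), iha.1, ihb.2]
      rfl

lemma Umass_nil : Umass ([] : List Bool) = 0 := by simp [Umass]
lemma dr_nil : dr ([] : List Bool) = 0 := by simp [dr]

lemma um_toL (t : TT) : Umass (toL t) + dr (toL t) = mT t := by
  induction t with
  | nil => simp [Umass_nil, dr_nil, mT, toL]
  | node a b iha ihb =>
    rw [toL, Umass_decomp (isDyck_toL a) (isDyck_toL b), dr_decomp]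
    match a, iha with
    | nil, _ =>
      rw [show toL nil = [] from rfl]
      rw [if_neg (by simp), if_neg (by simp), Umass_nil, dr_nil]
      rw [show mT (node nil b) = nuT nil + mT b from rfl, show nuT nil = 0 from rfl]
      omega
    | node a1 a2, iha =>
      have hg : (toL (node a1 a2)).getD 0 false = true := by
        rw [toL]
        exact getD_zero
      rw [if_pos hg, if_pos hg]
      have hm : matchD (toL (node a1 a2)) 0 = (toL a1).length + 1 := by
        rw [toL]
        exact matchD_zero (isDyck_toL a1)
      have hlen : (toL (node a1 a2)).length = (toL a1).length + 2 + (toL a2).length := by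
        rw [toL]
        exact length_L
      have hnum : (toL (node a1 a2)).length - matchD (toL (node a1 a2)) 0 - 1
          = 2 * sz a2 := by
        rw [hm, hlen, length_toL, length_toL]
        omega
      rw [hnum, Nat.mul_div_cancel_left _ (by norm_num : (0:ℕ) < 2)]
      have h2 : mT (node a1 a2) + sz a2 + 1 = nuT (node a1 a2) := by
        rw [show mT (node a1 a2) = nuT a1 + mT a2 from rfl,
          show nuT (node a1 a2) = nuT a1 + mT a2 + sz a2 + 1 from rfl]
      rw [show mT (node (node a1 a2) b) = nuT (node a1 a2) + mT b from rfl]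
      omega

lemma toL_injective : Function.Injective toL := by
  intro s t h
  induction s generalizing t with
  | nil =>
    cases t with
    | nil => rfl
    | node a b => simp [toL] at h
  | node a b iha ihb =>
    cases t with
    | nil => simp [toL] at h
    | node a' b' =>
      have hm : (toL a).length = (toL a').length := by
        have h1 : matchD (toL (node a b)) 0 = (toL a).length + 1 := by
          rw [toL]; exact matchD_zero (isDyck_toL a)
        have h2 : matchD (toL (node a' b')) 0 = (toL a').length + 1 := by
          rw [toL]; exact matchD_zero (isDyck_toL a')
        rw [show toL (node a b) = toL (node a' b') from h] at h1
        omega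
      rw [toL, toL] at h
      have h' := List.cons_injective h
      obtain ⟨hA, hB⟩ := List.append_inj h' hm
      have hB' := List.cons_injective hB
      rw [iha hA, ihb hB']

/-- Surjectivity onto Dyck words. -/
lemma toL_surj : ∀ N (P : List Bool), P.length ≤ N → IsDyck P → ∃ t : TT, toL t = P := by
  intro N
  induction N with
  | zero =>
    intro P hP _
    exact ⟨nil, by cases P with | nil => rfl | cons x R => simp at hP⟩
  | succ N ih =>
    intro P hlen hP
    cases hQ : P with
    | nil => exact ⟨nil, rfl⟩
    | cons x R =>
    rw [← hQ]
    have hne : P ≠ [] := by rw [hQ]; exact List.cons_ne_nil _ _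
    have hPlen : 0 < P.length := by rw [hQ]; simp
    have ht : P.getD 0 false = true := head_true hP hne
    obtain ⟨⟨hj0, hjeq⟩, hjlt⟩ := matchD_spec hP hPlen ht
    set j := matchD P 0 with hjdef
    rw [ups_zero, downs_zero] at hjeq
    have hmin : ∀ i, 0 < i → i ≤ j → downs P i < ups P i := by
      intro i hi hij
      by_contra h
      push_neg at h
      have heq : ups P i = downs P i := le_antisymm h (hP.2 i)
      rcases Nat.lt_or_ge i 2 with h2 | h2
      · have hi1 : i = 1 := by omega
        subst hi1
        obtain ⟨hs1, hs2⟩ := ups_succ_step hPlen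
        rw [if_pos ht] at hs1 hs2
        rw [show (0:ℕ)+1 = 1 from rfl, ups_zero] at hs1
        rw [show (0:ℕ)+1 = 1 from rfl, downs_zero] at hs2
        omega
      · have hle : j ≤ i - 1 := matchD_le ⟨by omega, by
          rw [ups_zero, downs_zero, show i - 1 + 1 = i by omega]
          omega⟩
        omega
    have hjfalse : P.getD j false = false := by
      cases hv : P.getD j false
      · rfl
      · exfalso
        obtain ⟨hs1, hs2⟩ := ups_succ_step hjlt
        rw [if_pos hv] at hs1 hs2
        have hstrict := hmin j hj0 le_rfl
        omega
    have hx : x = true := by rw [hQ] at ht; exact ht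
    subst hx
    set a : List Bool := R.take (j - 1) with hadef
    set b : List Bool := P.drop (j + 1) with hbdef
    have hRlen : R.length + 1 = P.length := by rw [hQ]; rfl
    have hPdecomp : P = true :: a ++ false :: b := by
      have h1 : P.take j = true :: a := by
        rw [hQ, show j = (j-1) + 1 by omega, List.take_succ_cons, hadef]
      have h2 : P.drop j = false :: b := by
        rw [List.drop_eq_getElem_cons hjlt, hbdef]
        congr 1
        have h3 := List.getD_eq_getElem P false hjlt
        rw [hjfalse] at h3
        exact h3.symm
      conv_lhs => rw [← List.take_append_drop j P]
      rw [h1, h2]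
    have halen : a.length = j - 1 := by
      rw [hadef, List.length_take]
      omega
    have hcta : a.count true = a.count false := by
      have e1 : ups P (j+1) = a.count true + ups b 0 + 1 := by
        rw [hPdecomp, show j + 1 = a.length + 2 + 0 by omega]
        exact ups_hi 0
      have e2 : downs P (j+1) = a.count false + downs b 0 + 1 := by
        rw [hPdecomp, show j + 1 = a.length + 2 + 0 by omega]
        exact downs_hi 0
      have hz1 : ups b 0 = 0 := rfl
      have hz2 : downs b 0 = 0 := rfl
      omega
    have hdycka : IsDyck a := by
      refine ⟨hcta, fun k => ?_⟩
      rcases le_or_gt k a.length with hk | hk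
      · have e1 : ups P (k+1) = ups a k + 1 := by rw [hPdecomp]; exact ups_lo hk
        have e2 : downs P (k+1) = downs a k := by rw [hPdecomp]; exact downs_lo hk
        have := hmin (k+1) (Nat.succ_pos _) (by omega)
        omega
      · rw [ups_top (le_of_lt hk), downs_top (le_of_lt hk), hcta]
    have hdyckb : IsDyck b := by
      have hct : P.count true = a.count true + b.count true + 1 := by
        rw [hPdecomp]
        simp [List.count_cons, List.count_append]
      have hcf : P.count false = a.count false + b.count false + 1 := by
        rw [hPdecomp]
        simp [List.count_cons, List.count_append]
        omega
      refine ⟨by have := hP.1; omega, fun k => ?_⟩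
      have e1 : ups P (a.length + 2 + k) = a.count true + ups b k + 1 := by
        rw [hPdecomp]; exact ups_hi k
      have e2 : downs P (a.length + 2 + k) = a.count false + downs b k + 1 := by
        rw [hPdecomp]; exact downs_hi k
      have := hP.2 (a.length + 2 + k)
      omega
    have hblen : b.length < P.length := by
      rw [hbdef, List.length_drop]
      omega
    have halen2 : a.length < P.length := by omega
    obtain ⟨ta, hta⟩ := ih a (by omega) hdycka
    obtain ⟨tb, htb⟩ := ih b (by omega) hdyckb
    exact ⟨node ta tb, by rw [toL, hta, htb, ← hPdecomp]⟩

end TT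

open TT

/-- From fiberwise equivalences, build a statistic-transporting equivalence. -/
lemma exists_statEquiv {α β : Type*} (u : α → ℕ) (v : β → ℕ)
    (h : ∀ k, Nonempty ({x : α // u x = k} ≃ {y : β // v y = k})) :
    ∃ e : α ≃ β, ∀ x, u x = v (e x) := by
  classical
  refine ⟨(Equiv.sigmaFiberEquiv u).symm.trans
    ((Equiv.sigmaCongrRight fun k => (h k).some).trans (Equiv.sigmaFiberEquiv v)), fun x => ?_⟩
  simp only [Equiv.trans_apply, Equiv.sigmaCongrRight_apply]
  exact (((h (u x)).some ⟨x, rfl⟩).2).symm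

lemma sz_of_DyckN {n : ℕ} {t : TT} (h : DyckN n (toL t)) : sz t = n := by
  have := length_toL t
  have h2 := h.2
  omega

lemma DyckN_toL {n : ℕ} {t : TT} (h : sz t = n) : DyckN n (toL t) :=
  ⟨isDyck_toL t, by rw [length_toL, h]⟩

/-- the equivalence between trees of size n and Dyck paths of semilength n -/
noncomputable def treeEquiv (n : ℕ) : {t : TT // t ∈ allT n} ≃ {P : List Bool // DyckN n P} := by
  refine Equiv.ofBijective
    (fun t => ⟨toL t.1, DyckN_toL ((mem_allT n t.1).1 t.2)⟩) ⟨?_, ?_⟩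
  · intro s t hst
    have : toL s.1 = toL t.1 := congrArg Subtype.val hst
    exact Subtype.ext (toL_injective this)
  · rintro ⟨P, hP⟩
    obtain ⟨t, ht⟩ := toL_surj P.length P le_rfl hP.1
    refine ⟨⟨t, (mem_allT n t).2 ?_⟩, Subtype.ext ht⟩
    exact sz_of_DyckN (ht ▸ hP)

lemma card_fiber_eq (n k : ℕ) (f : TT → ℕ) :
    Nonempty ({x : {t : TT // t ∈ allT n} // f x.1 = k}
      ≃ {t : TT // t ∈ (allT n).filter fun t => f t = k}) := by
  classical
  refine ⟨⟨fun x => ⟨x.1.1, Finset.mem_filter.2 ⟨x.1.2, x.2⟩⟩,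
    fun t => ⟨⟨t.1, (Finset.mem_filter.1 t.2).1⟩, (Finset.mem_filter.1 t.2).2⟩, ?_, ?_⟩⟩
  · rintro ⟨⟨t, ht⟩, hf⟩
    rfl
  · rintro ⟨t, ht⟩
    rfl

/-- the main tree-level equivalence -/
lemma exists_tree_equiv (n : ℕ) :
    ∃ e : {t : TT // t ∈ allT n} ≃ {t : TT // t ∈ allT n},
      ∀ t, sT t.1 = mT (e t).1 := by
  refine exists_statEquiv (fun t : {t : TT // t ∈ allT n} => sT t.1)
    (fun t : {t : TT // t ∈ allT n} => mT t.1) (fun k => ?_)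
  obtain ⟨e1⟩ := card_fiber_eq n k sT
  obtain ⟨e2⟩ := card_fiber_eq n k mT
  refine ⟨e1.trans (?_ : _ ≃ {t : TT // t ∈ (allT n).filter fun t => mT t = k}) |>.trans e2.symm⟩
  exact Fintype.equivOfCardEq (by
    rw [Fintype.card_coe, Fintype.card_coe]
    exact card_sT_eq_card_mT n k)

theorem stmt10_part1 (n : ℕ) :
    ∃ Θ : {P : List Bool // DyckN n P} ≃ {P : List Bool // DyckN n P},
      ∀ P : {P : List Bool // DyckN n P}, sups P.1 = Umass (Θ P).1 + dr (Θ P).1 := by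
  obtain ⟨e, he⟩ := exists_tree_equiv n
  refine ⟨((treeEquiv n).symm.trans e).trans (treeEquiv n), fun P => ?_⟩
  simp only [Equiv.trans_apply]
  have h1 : P.1 = toL ((treeEquiv n).symm P).1 := by
    have := (treeEquiv n).apply_symm_apply P
    have h2 := congrArg Subtype.val this
    exact h2.symm
  have h3 : ((treeEquiv n) (e ((treeEquiv n).symm P))).1 = toL (e ((treeEquiv n).symm P)).1 := rfl
  rw [h1, h3, (sups_toL _).1, um_toL]
  exact he _

theorem set_eq_sups (n k : ℕ) :
    {P : List Bool | DyckN n P ∧ sups P = k}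
      = ↑(((allT n).filter fun t => sT t = k).image toL) := by
  ext P
  simp only [Set.mem_setOf_eq, Finset.coe_image, Set.mem_image, Finset.mem_coe,
    Finset.mem_filter, mem_allT]
  constructor
  · rintro ⟨hP, hs⟩
    obtain ⟨t, ht⟩ := toL_surj P.length P le_rfl hP.1
    refine ⟨t, ⟨sz_of_DyckN (ht ▸ hP), ?_⟩, ht⟩
    rw [← (sups_toL t).1, ht, hs]
  · rintro ⟨t, ⟨hsz, hst⟩, rfl⟩
    exact ⟨DyckN_toL hsz, by rw [(sups_toL t).1, hst]⟩

theorem set_eq_um (n k : ℕ) :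
    {P : List Bool | DyckN n P ∧ Umass P + dr P = k}
      = ↑(((allT n).filter fun t => mT t = k).image toL) := by
  ext P
  simp only [Set.mem_setOf_eq, Finset.coe_image, Set.mem_image, Finset.mem_coe,
    Finset.mem_filter, mem_allT]
  constructor
  · rintro ⟨hP, hs⟩
    obtain ⟨t, ht⟩ := toL_surj P.length P le_rfl hP.1
    refine ⟨t, ⟨sz_of_DyckN (ht ▸ hP), ?_⟩, ht⟩
    rw [← um_toL t, ht, hs]
  · rintro ⟨t, ⟨hsz, hst⟩, rfl⟩
    exact ⟨DyckN_toL hsz, by rw [um_toL t, hst]⟩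


/-- there is a bijection `Θ` on Dyck paths of semilength `n` with
`sups(P) = Umass(Θ P) + dr(Θ P)`; consequently `sups` and `Umass + dr` are
equidistributed over `Dyck_n`. -/
theorem stmt10 (n : ℕ) :
    (∃ Θ : {P : List Bool // DyckN n P} ≃ {P : List Bool // DyckN n P},
        ∀ P : {P : List Bool // DyckN n P}, sups P.1 = Umass (Θ P).1 + dr (Θ P).1) ∧
    (∀ k : ℕ,
      Set.ncard {P : List Bool | DyckN n P ∧ sups P = k} =
      Set.ncard {P : List Bool | DyckN n P ∧ Umass P + dr P = k}) := by
  refine ⟨stmt10_part1 n, fun k => ?_⟩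
  rw [set_eq_sups n k, set_eq_um n k, Set.ncard_coe_finset, Set.ncard_coe_finset,
    Finset.card_image_of_injective _ toL_injective,
    Finset.card_image_of_injective _ toL_injective]
  exact card_sT_eq_card_mT n k

end MahonianStats
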